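/- arXiv:1607.05224 — 2 statements merged into one kernel-verified Lean document; each statement's English description precedes it below -/
import Mathlib

section
/- For every q ∈ (0, 1/2] and every ε ∈ [−1, 1] with (1+ε)q ∈ (0,1), the relative entropy satisfies D((1+ε)q ‖ q) ≥ (q/4)·ε². -/
private lemma hderiv (y : ℝ) (hy : 0 < 1 + y) :
    HasDerivAt (fun x : ℝ => (1 + x) * Real.log (1 + x) - x - x ^ 2 / 4)
      (Real.log (1 + y) - y / 2) y := by
  have h1 : HasDerivAt (fun x : ℝ => 1 + x) 1 y := (hasDerivAt_id y).const_add 1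
  have hlog : HasDerivAt (fun x : ℝ => Real.log (1 + x)) (1 / (1 + y)) y := by
    simpa [Function.comp_def] using (Real.hasDerivAt_log (ne_of_gt hy)).comp y h1
  have hmul : HasDerivAt (fun x : ℝ => (1 + x) * Real.log (1 + x))
      (1 * Real.log (1 + y) + (1 + y) * (1 / (1 + y))) y := h1.mul hlog
  have hpow : HasDerivAt (fun x : ℝ => x ^ 2 / 4) (2 * y / 4) y := by
    simpa using (hasDerivAt_pow 2 y).div_const 4
  have := (hmul.sub (hasDerivAt_id y)).sub hpow
  convert this using 1
  any_goals rfl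
  rw [mul_one_div_cancel (ne_of_gt hy)]
  ring

private lemma h_nonneg (t : ℝ) (h1 : -1 < t) (h2 : t ≤ 1) :
    (1 + t) * Real.log (1 + t) - t - t ^ 2 / 4 ≥ 0 := by
  set f : ℝ → ℝ := fun x => (1 + x) * Real.log (1 + x) - x - x ^ 2 / 4 with hf
  have hf0 : f 0 = 0 := by simp [hf]
  have hcont : ∀ s : Set ℝ, (∀ x ∈ s, 0 < 1 + x) → ContinuousOn f s := by
    intro s hs
    exact fun x hx => ((hderiv x (hs x hx)).continuousAt).continuousWithinAt
  rcases le_or_gt 0 t with ht | ht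
  · -- monotone on [0, t]
    have hmono : MonotoneOn f (Set.Icc 0 t) := by
      apply monotoneOn_of_deriv_nonneg (convex_Icc 0 t)
      · exact hcont _ (fun x hx => by nlinarith [hx.1])
      · intro x hx
        rw [interior_Icc] at hx
        exact (hderiv x (by nlinarith [hx.1])).differentiableAt.differentiableWithinAt
      · intro x hx
        rw [interior_Icc] at hx
        have hx0 : 0 < x := hx.1
        have hx1 : x < t := hx.2
        have hxp : 0 < 1 + x := by linarith
        rw [(hderiv x hxp).deriv]
        have hlb : Real.log (1 + x) ≥ x / (1 + x) := by
          have := Real.log_le_sub_one_of_pos (x := 1 / (1 + x)) (by positivity)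
          rw [Real.log_div one_ne_zero (ne_of_gt hxp), Real.log_one] at this
          have : -Real.log (1 + x) ≤ 1 / (1 + x) - 1 := by linarith
          have h2 : 1 / (1 + x) - 1 = -(x / (1 + x)) := by field_simp; ring
          linarith [h2 ▸ this]
        have hxt : x ≤ 1 := le_trans (le_of_lt hx1) h2
        have hge : x / (1 + x) ≥ x / 2 := by
          rw [ge_iff_le, div_le_div_iff₀ two_pos hxp]
          nlinarith
        linarith
    have := hmono (Set.left_mem_Icc.mpr ht) (Set.right_mem_Icc.mpr ht) ht
    rw [hf0] at this
    exact this
  · -- antitone on [t, 0]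
    have hanti : AntitoneOn f (Set.Icc t 0) := by
      apply antitoneOn_of_deriv_nonpos (convex_Icc t 0)
      · exact hcont _ (fun x hx => by nlinarith [hx.1])
      · intro x hx
        rw [interior_Icc] at hx
        exact (hderiv x (by nlinarith [hx.1])).differentiableAt.differentiableWithinAt
      · intro x hx
        rw [interior_Icc] at hx
        have hxp : 0 < 1 + x := by linarith [hx.1]
        rw [(hderiv x hxp).deriv]
        have := Real.log_le_sub_one_of_pos hxp
        linarith [hx.2]
    have := hanti (Set.left_mem_Icc.mpr (le_of_lt ht)) (Set.right_mem_Icc.mpr (le_of_lt ht)) (le_of_lt ht)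
    rw [hf0] at this
    exact this

noncomputable def relEntBer (x y : ℝ) : ℝ :=
  x * Real.log (x / y) + (1 - x) * Real.log ((1 - x) / (1 - y))

theorem relEntBer_quadratic_lower_bound (q ε : ℝ)
    (hq : q ∈ Set.Ioc (0 : ℝ) (1 / 2)) (hε : ε ∈ Set.Icc (-1 : ℝ) 1)
    (hεq : (1 + ε) * q ∈ Set.Ioo (0 : ℝ) 1) :
    relEntBer ((1 + ε) * q) q ≥ (q / 4) * ε ^ 2 := by
  obtain ⟨hq0, hq2⟩ := hq
  obtain ⟨hx0, hx1⟩ := hεq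
  have hε1 : 0 < 1 + ε := by nlinarith
  have h1q : 0 < 1 - q := by linarith
  have h1x : 0 < 1 - (1 + ε) * q := by linarith
  -- first term
  have hquot : (1 + ε) * q / q = 1 + ε := by field_simp
  -- second term lower bound: a log(a/b) ≥ a - b
  have hsec : (1 - (1 + ε) * q) * Real.log ((1 - (1 + ε) * q) / (1 - q))
      ≥ (1 - (1 + ε) * q) - (1 - q) := by
    set a := 1 - (1 + ε) * q
    set b := 1 - q
    have := Real.log_le_sub_one_of_pos (x := b / a) (by positivity)
    have hlog : Real.log (a / b) = - Real.log (b / a) := by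
      rw [← Real.log_inv]; congr 1; field_simp
    rw [hlog]
    have hba : b / a - 1 = (b - a) / a := by field_simp
    rw [hba] at this
    have : a * Real.log (b / a) ≤ a * ((b - a) / a) :=
      mul_le_mul_of_nonneg_left this (le_of_lt h1x)
    have ha : a * ((b - a) / a) = b - a := by field_simp
    nlinarith
  have hh := h_nonneg ε (by linarith) hε.2
  unfold relEntBer
  rw [hquot]
  nlinarith [mul_nonneg (le_of_lt hq0) hh, hq0.le]
end

section
/- Fix K > 0 and consider the linearization of the Fokker–Planck equation ∂_t q = (1/2)∂_θ² q − ∂_θ(q · (J ∗ q)) with J(θ) = −(K/2)sin θ around the uniform density 1/(2π) on the circle. In Fourier coordinates c_k(t) = ∫ q_t(θ)cos(kθ)dθ, s_k(t) = ∫ q_t(θ)sin(kθ)dθ, the linearized evolution decouples: each mode satisfies ẋ = λ_k x with λ_1 = (K−2)/4 and λ_k = −k²/2 for k ≥ 2. In particular the uniform density is linearly unstable if and only if K > 2. -/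
open Real intervalIntegral

namespace KuramotoAux

open MeasureTheory Set Filter

lemma sin_n2pi (n : ℕ) : Real.sin ((n : ℝ) * (2 * π)) = 0 := by
  have h : (n : ℝ) * (2 * π) = ((2 * n : ℕ) : ℝ) * π := by push_cast; ring
  rw [h, Real.sin_nat_mul_pi]

lemma cos_n2pi (n : ℕ) : Real.cos ((n : ℝ) * (2 * π)) = 1 := Real.cos_nat_mul_two_pi n

lemma hasDerivAt_cosn (n : ℝ) (θ : ℝ) :
    HasDerivAt (fun x => Real.cos (n * x)) (-n * Real.sin (n * θ)) θ := by
  have h1 : HasDerivAt (fun x : ℝ => n * x) n θ := by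
    simpa using (hasDerivAt_id θ).const_mul n
  convert h1.cos using 1; ring

lemma hasDerivAt_sinn (n : ℝ) (θ : ℝ) :
    HasDerivAt (fun x => Real.sin (n * x)) (n * Real.cos (n * θ)) θ := by
  have h1 : HasDerivAt (fun x : ℝ => n * x) n θ := by
    simpa using (hasDerivAt_id θ).const_mul n
  convert h1.sin using 1; ring

lemma integral_cosn (n : ℕ) : (∫ θ in (0:ℝ)..(2*π), Real.cos ((n:ℝ) * θ))
    = if n = 0 then 2*π else 0 := by
  rcases eq_or_ne n 0 with hn | hn
  · simp [hn]
  · rw [if_neg hn]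
    have hd : ∀ θ ∈ uIcc (0:ℝ) (2*π),
        HasDerivAt (fun x => Real.sin ((n:ℝ) * x) / n) (Real.cos ((n:ℝ) * θ)) θ := by
      intro θ _
      have := (hasDerivAt_sinn (n:ℝ) θ).div_const (n:ℝ)
      refine this.congr_deriv ?_
      have : (n:ℝ) ≠ 0 := Nat.cast_ne_zero.mpr hn
      field_simp
    rw [intervalIntegral.integral_eq_sub_of_hasDerivAt hd
      ((Real.continuous_cos.comp (continuous_const.mul continuous_id)).intervalIntegrable _ _)]
    simp [sin_n2pi]

lemma integral_sinn (n : ℕ) : (∫ θ in (0:ℝ)..(2*π), Real.sin ((n:ℝ) * θ)) = 0 := by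
  rcases eq_or_ne n 0 with hn | hn
  · simp [hn]
  · have hd : ∀ θ ∈ uIcc (0:ℝ) (2*π),
        HasDerivAt (fun x => -(Real.cos ((n:ℝ) * x)) / n) (Real.sin ((n:ℝ) * θ)) θ := by
      intro θ _
      have := ((hasDerivAt_cosn (n:ℝ) θ).neg).div_const (n:ℝ)
      refine this.congr_deriv ?_
      have : (n:ℝ) ≠ 0 := Nat.cast_ne_zero.mpr hn
      field_simp
    rw [intervalIntegral.integral_eq_sub_of_hasDerivAt hd
      ((Real.continuous_sin.comp (continuous_const.mul continuous_id)).intervalIntegrable _ _)]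
    simp [cos_n2pi]

lemma orth_cc (k : ℕ) (hk : 1 ≤ k) :
    (∫ θ in (0:ℝ)..(2*π), Real.cos θ * Real.cos ((k:ℝ) * θ))
      = if k = 1 then π else 0 := by
  have hcast : ((k - 1 : ℕ) : ℝ) = (k : ℝ) - 1 := by
    push_cast [Nat.cast_sub hk]; ring
  have hpt : ∀ θ : ℝ, Real.cos θ * Real.cos ((k:ℝ) * θ)
      = (Real.cos (((k-1:ℕ):ℝ) * θ) + Real.cos (((k+1:ℕ):ℝ) * θ)) / 2 := by
    intro θ
    rw [hcast]
    push_cast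
    rw [show ((k:ℝ) - 1) * θ = (k:ℝ) * θ - θ by ring,
        show ((k:ℝ) + 1) * θ = (k:ℝ) * θ + θ by ring,
        Real.cos_sub, Real.cos_add]
    ring
  rw [intervalIntegral.integral_congr (fun θ _ => hpt θ)]
  have i1 : IntervalIntegrable (fun θ => Real.cos (((k-1:ℕ):ℝ) * θ)) volume 0 (2*π) :=
    (Real.continuous_cos.comp (continuous_const.mul continuous_id)).intervalIntegrable _ _
  have i2 : IntervalIntegrable (fun θ => Real.cos (((k+1:ℕ):ℝ) * θ)) volume 0 (2*π) :=
    (Real.continuous_cos.comp (continuous_const.mul continuous_id)).intervalIntegrable _ _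
  rw [intervalIntegral.integral_div, intervalIntegral.integral_add i1 i2,
      integral_cosn, integral_cosn]
  rcases eq_or_ne k 1 with hk1 | hk1
  · subst hk1; norm_num
  · have h1 : k - 1 ≠ 0 := by omega
    have h2 : k + 1 ≠ 0 := by omega
    rw [if_neg h1, if_neg h2, if_neg hk1]
    norm_num

lemma orth_ss (k : ℕ) (hk : 1 ≤ k) :
    (∫ θ in (0:ℝ)..(2*π), Real.sin θ * Real.sin ((k:ℝ) * θ))
      = if k = 1 then π else 0 := by
  have hcast : ((k - 1 : ℕ) : ℝ) = (k : ℝ) - 1 := by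
    push_cast [Nat.cast_sub hk]; ring
  have hpt : ∀ θ : ℝ, Real.sin θ * Real.sin ((k:ℝ) * θ)
      = (Real.cos (((k-1:ℕ):ℝ) * θ) - Real.cos (((k+1:ℕ):ℝ) * θ)) / 2 := by
    intro θ
    rw [hcast]
    push_cast
    rw [show ((k:ℝ) - 1) * θ = (k:ℝ) * θ - θ by ring,
        show ((k:ℝ) + 1) * θ = (k:ℝ) * θ + θ by ring,
        Real.cos_sub, Real.cos_add]
    ring
  rw [intervalIntegral.integral_congr (fun θ _ => hpt θ)]
  have i1 : IntervalIntegrable (fun θ => Real.cos (((k-1:ℕ):ℝ) * θ)) volume 0 (2*π) :=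
    (Real.continuous_cos.comp (continuous_const.mul continuous_id)).intervalIntegrable _ _
  have i2 : IntervalIntegrable (fun θ => Real.cos (((k+1:ℕ):ℝ) * θ)) volume 0 (2*π) :=
    (Real.continuous_cos.comp (continuous_const.mul continuous_id)).intervalIntegrable _ _
  rw [intervalIntegral.integral_div, intervalIntegral.integral_sub i1 i2,
      integral_cosn, integral_cosn]
  rcases eq_or_ne k 1 with hk1 | hk1
  · subst hk1; norm_num
  · have h1 : k - 1 ≠ 0 := by omega
    have h2 : k + 1 ≠ 0 := by omega
    rw [if_neg h1, if_neg h2, if_neg hk1]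
    norm_num

lemma orth_sc (k : ℕ) (hk : 1 ≤ k) :
    (∫ θ in (0:ℝ)..(2*π), Real.sin θ * Real.cos ((k:ℝ) * θ)) = 0 := by
  have hcast : ((k - 1 : ℕ) : ℝ) = (k : ℝ) - 1 := by
    push_cast [Nat.cast_sub hk]; ring
  have hpt : ∀ θ : ℝ, Real.sin θ * Real.cos ((k:ℝ) * θ)
      = (Real.sin (((k+1:ℕ):ℝ) * θ) - Real.sin (((k-1:ℕ):ℝ) * θ)) / 2 := by
    intro θ
    rw [hcast]
    push_cast
    rw [show ((k:ℝ) - 1) * θ = (k:ℝ) * θ - θ by ring,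
        show ((k:ℝ) + 1) * θ = (k:ℝ) * θ + θ by ring,
        Real.sin_sub, Real.sin_add]
    ring
  rw [intervalIntegral.integral_congr (fun θ _ => hpt θ)]
  have i1 : IntervalIntegrable (fun θ => Real.sin (((k+1:ℕ):ℝ) * θ)) volume 0 (2*π) :=
    (Real.continuous_sin.comp (continuous_const.mul continuous_id)).intervalIntegrable _ _
  have i2 : IntervalIntegrable (fun θ => Real.sin (((k-1:ℕ):ℝ) * θ)) volume 0 (2*π) :=
    (Real.continuous_sin.comp (continuous_const.mul continuous_id)).intervalIntegrable _ _
  rw [intervalIntegral.integral_div, intervalIntegral.integral_sub i1 i2,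
      integral_sinn, integral_sinn]
  norm_num

lemma orth_cs (k : ℕ) (hk : 1 ≤ k) :
    (∫ θ in (0:ℝ)..(2*π), Real.cos θ * Real.sin ((k:ℝ) * θ)) = 0 := by
  have hcast : ((k - 1 : ℕ) : ℝ) = (k : ℝ) - 1 := by
    push_cast [Nat.cast_sub hk]; ring
  have hpt : ∀ θ : ℝ, Real.cos θ * Real.sin ((k:ℝ) * θ)
      = (Real.sin (((k+1:ℕ):ℝ) * θ) + Real.sin (((k-1:ℕ):ℝ) * θ)) / 2 := by
    intro θ
    rw [hcast]
    push_cast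
    rw [show ((k:ℝ) - 1) * θ = (k:ℝ) * θ - θ by ring,
        show ((k:ℝ) + 1) * θ = (k:ℝ) * θ + θ by ring,
        Real.sin_sub, Real.sin_add]
    ring
  rw [intervalIntegral.integral_congr (fun θ _ => hpt θ)]
  have i1 : IntervalIntegrable (fun θ => Real.sin (((k+1:ℕ):ℝ) * θ)) volume 0 (2*π) :=
    (Real.continuous_sin.comp (continuous_const.mul continuous_id)).intervalIntegrable _ _
  have i2 : IntervalIntegrable (fun θ => Real.sin (((k-1:ℕ):ℝ) * θ)) volume 0 (2*π) :=
    (Real.continuous_sin.comp (continuous_const.mul continuous_id)).intervalIntegrable _ _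
  rw [intervalIntegral.integral_div, intervalIntegral.integral_add i1 i2,
      integral_sinn, integral_sinn]
  norm_num

lemma contdiff_deriv (f : ℝ → ℝ) (hf : ContDiff ℝ 2 f) : ContDiff ℝ 1 (deriv f) := by
  have h2 : (2 : WithTop ℕ∞) = 1 + 1 := by norm_num
  rw [h2] at hf
  exact (contDiff_succ_iff_deriv.mp hf).2.2

lemma deriv_periodic (f : ℝ → ℝ) (hp : ∀ θ, f (θ + 2*π) = f θ) (θ : ℝ) :
    deriv f (θ + 2*π) = deriv f θ := by
  have e : (fun x => f (x + 2*π)) = f := funext fun x => hp x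
  calc deriv f (θ + 2*π) = deriv (fun x => f (x + 2*π)) θ :=
        (deriv_comp_add_const f (2*π) θ).symm
    _ = deriv f θ := by rw [e]

/-- Integration by parts twice: `∫ f'' * g = -k² ∫ f * g` for `g = cos(k·)` -/
lemma parts_cos (f : ℝ → ℝ) (hf : ContDiff ℝ 2 f) (hp : ∀ θ, f (θ + 2*π) = f θ) (k : ℕ) :
    (∫ θ in (0:ℝ)..(2*π), iteratedDeriv 2 f θ * Real.cos ((k:ℝ) * θ))
      = -(k:ℝ)^2 * ∫ θ in (0:ℝ)..(2*π), f θ * Real.cos ((k:ℝ) * θ) := by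
  have hdf : Differentiable ℝ f := hf.differentiable two_ne_zero
  have hf1 : ContDiff ℝ 1 (deriv f) := contdiff_deriv f hf
  have hdf1 : Differentiable ℝ (deriv f) := hf1.differentiable one_ne_zero
  have hcf2 : Continuous (deriv (deriv f)) := hf1.continuous_deriv le_rfl
  have hcf1 : Continuous (deriv f) := hf1.continuous
  have hi2 : iteratedDeriv 2 f = deriv (deriv f) := by
    rw [iteratedDeriv_succ, iteratedDeriv_one]
  have hsc : Continuous fun θ : ℝ => Real.sin ((k:ℝ) * θ) :=
    Real.continuous_sin.comp (continuous_const.mul continuous_id)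
  have hcc : Continuous fun θ : ℝ => Real.cos ((k:ℝ) * θ) :=
    Real.continuous_cos.comp (continuous_const.mul continuous_id)
  have step1 : (∫ θ in (0:ℝ)..(2*π), Real.cos ((k:ℝ) * θ) * deriv (deriv f) θ)
      = Real.cos ((k:ℝ) * (2*π)) * deriv f (2*π) - Real.cos ((k:ℝ) * 0) * deriv f 0
        - ∫ θ in (0:ℝ)..(2*π), (-(k:ℝ) * Real.sin ((k:ℝ) * θ)) * deriv f θ := by
    exact intervalIntegral.integral_mul_deriv_eq_deriv_mul
      (fun x _ => hasDerivAt_cosn (k:ℝ) x)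
      (fun x _ => (hdf1 x).hasDerivAt)
      (((continuous_const.mul hsc)).intervalIntegrable _ _)
      (hcf2.intervalIntegrable _ _)
  have step2 : (∫ θ in (0:ℝ)..(2*π), Real.sin ((k:ℝ) * θ) * deriv f θ)
      = Real.sin ((k:ℝ) * (2*π)) * f (2*π) - Real.sin ((k:ℝ) * 0) * f 0
        - ∫ θ in (0:ℝ)..(2*π), ((k:ℝ) * Real.cos ((k:ℝ) * θ)) * f θ := by
    exact intervalIntegral.integral_mul_deriv_eq_deriv_mul
      (fun x _ => hasDerivAt_sinn (k:ℝ) x)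
      (fun x _ => (hdf x).hasDerivAt)
      (((continuous_const.mul hcc)).intervalIntegrable _ _)
      (hcf1.intervalIntegrable _ _)
  have hbd1 : deriv f (2*π) = deriv f 0 := by
    have := deriv_periodic f hp 0; simpa using this
  have e1 : (∫ θ in (0:ℝ)..(2*π), (-(k:ℝ) * Real.sin ((k:ℝ) * θ)) * deriv f θ)
      = -(k:ℝ) * ∫ θ in (0:ℝ)..(2*π), Real.sin ((k:ℝ) * θ) * deriv f θ := by
    rw [← intervalIntegral.integral_const_mul]
    congr 1; funext θ; ring
  have e2 : (∫ θ in (0:ℝ)..(2*π), ((k:ℝ) * Real.cos ((k:ℝ) * θ)) * f θ)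
      = (k:ℝ) * ∫ θ in (0:ℝ)..(2*π), Real.cos ((k:ℝ) * θ) * f θ := by
    rw [← intervalIntegral.integral_const_mul]
    congr 1; funext θ; ring
  have emain : (∫ θ in (0:ℝ)..(2*π), iteratedDeriv 2 f θ * Real.cos ((k:ℝ) * θ))
      = ∫ θ in (0:ℝ)..(2*π), Real.cos ((k:ℝ) * θ) * deriv (deriv f) θ := by
    rw [hi2]; congr 1; funext θ; ring
  have efin : (∫ θ in (0:ℝ)..(2*π), f θ * Real.cos ((k:ℝ) * θ))
      = ∫ θ in (0:ℝ)..(2*π), Real.cos ((k:ℝ) * θ) * f θ := by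
    congr 1; funext θ; ring
  rw [emain, step1, e1, step2, e2, hbd1, efin, cos_n2pi]
  simp [sin_n2pi]
  ring

/-- Integration by parts twice: `∫ f'' * g = -k² ∫ f * g` for `g = sin(k·)` -/
lemma parts_sin (f : ℝ → ℝ) (hf : ContDiff ℝ 2 f) (hp : ∀ θ, f (θ + 2*π) = f θ) (k : ℕ) :
    (∫ θ in (0:ℝ)..(2*π), iteratedDeriv 2 f θ * Real.sin ((k:ℝ) * θ))
      = -(k:ℝ)^2 * ∫ θ in (0:ℝ)..(2*π), f θ * Real.sin ((k:ℝ) * θ) := by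
  have hdf : Differentiable ℝ f := hf.differentiable two_ne_zero
  have hf1 : ContDiff ℝ 1 (deriv f) := contdiff_deriv f hf
  have hdf1 : Differentiable ℝ (deriv f) := hf1.differentiable one_ne_zero
  have hcf2 : Continuous (deriv (deriv f)) := hf1.continuous_deriv le_rfl
  have hcf1 : Continuous (deriv f) := hf1.continuous
  have hi2 : iteratedDeriv 2 f = deriv (deriv f) := by
    rw [iteratedDeriv_succ, iteratedDeriv_one]
  have hsc : Continuous fun θ : ℝ => Real.sin ((k:ℝ) * θ) :=
    Real.continuous_sin.comp (continuous_const.mul continuous_id)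
  have hcc : Continuous fun θ : ℝ => Real.cos ((k:ℝ) * θ) :=
    Real.continuous_cos.comp (continuous_const.mul continuous_id)
  have step1 : (∫ θ in (0:ℝ)..(2*π), Real.sin ((k:ℝ) * θ) * deriv (deriv f) θ)
      = Real.sin ((k:ℝ) * (2*π)) * deriv f (2*π) - Real.sin ((k:ℝ) * 0) * deriv f 0
        - ∫ θ in (0:ℝ)..(2*π), ((k:ℝ) * Real.cos ((k:ℝ) * θ)) * deriv f θ := by
    exact intervalIntegral.integral_mul_deriv_eq_deriv_mul
      (fun x _ => hasDerivAt_sinn (k:ℝ) x)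
      (fun x _ => (hdf1 x).hasDerivAt)
      (((continuous_const.mul hcc)).intervalIntegrable _ _)
      (hcf2.intervalIntegrable _ _)
  have step2 : (∫ θ in (0:ℝ)..(2*π), Real.cos ((k:ℝ) * θ) * deriv f θ)
      = Real.cos ((k:ℝ) * (2*π)) * f (2*π) - Real.cos ((k:ℝ) * 0) * f 0
        - ∫ θ in (0:ℝ)..(2*π), (-(k:ℝ) * Real.sin ((k:ℝ) * θ)) * f θ := by
    exact intervalIntegral.integral_mul_deriv_eq_deriv_mul
      (fun x _ => hasDerivAt_cosn (k:ℝ) x)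
      (fun x _ => (hdf x).hasDerivAt)
      (((continuous_const.mul hsc)).intervalIntegrable _ _)
      (hcf1.intervalIntegrable _ _)
  have hbdf : f (2*π) = f 0 := by have := hp 0; simpa using this
  have e1 : (∫ θ in (0:ℝ)..(2*π), ((k:ℝ) * Real.cos ((k:ℝ) * θ)) * deriv f θ)
      = (k:ℝ) * ∫ θ in (0:ℝ)..(2*π), Real.cos ((k:ℝ) * θ) * deriv f θ := by
    rw [← intervalIntegral.integral_const_mul]
    congr 1; funext θ; ring
  have e2 : (∫ θ in (0:ℝ)..(2*π), (-(k:ℝ) * Real.sin ((k:ℝ) * θ)) * f θ)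
      = -(k:ℝ) * ∫ θ in (0:ℝ)..(2*π), Real.sin ((k:ℝ) * θ) * f θ := by
    rw [← intervalIntegral.integral_const_mul]
    congr 1; funext θ; ring
  have emain : (∫ θ in (0:ℝ)..(2*π), iteratedDeriv 2 f θ * Real.sin ((k:ℝ) * θ))
      = ∫ θ in (0:ℝ)..(2*π), Real.sin ((k:ℝ) * θ) * deriv (deriv f) θ := by
    rw [hi2]; congr 1; funext θ; ring
  have efin : (∫ θ in (0:ℝ)..(2*π), f θ * Real.sin ((k:ℝ) * θ))
      = ∫ θ in (0:ℝ)..(2*π), Real.sin ((k:ℝ) * θ) * f θ := by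
    congr 1; funext θ; ring
  rw [emain, step1, e1, step2, e2, hbdf, efin, cos_n2pi]
  simp [sin_n2pi]
  ring

/-- Differentiation under the integral sign. -/
lemma deriv_under (h : ℝ → ℝ → ℝ)
    (hcont : Continuous fun p : ℝ × ℝ => h p.1 p.2)
    (hDcont : Continuous fun p : ℝ × ℝ => deriv (fun t => h t p.2) p.1)
    (hdiff : ∀ t θ, DifferentiableAt ℝ (fun t' => h t' θ) t)
    (g : ℝ → ℝ) (hg : Continuous g) (t : ℝ) :
    HasDerivAt (fun t' => ∫ θ in (0:ℝ)..(2*π), h t' θ * g θ)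
      (∫ θ in (0:ℝ)..(2*π), deriv (fun t' => h t' θ) t * g θ) t := by
  have hF' : Continuous fun p : ℝ × ℝ => deriv (fun t' => h t' p.2) p.1 * g p.2 :=
    hDcont.mul (hg.comp continuous_snd)
  obtain ⟨M, hM⟩ := (IsCompact.prod (isCompact_Icc (a := t - 1) (b := t + 1))
      (isCompact_Icc (a := (0:ℝ)) (b := 2*π))).exists_bound_of_continuousOn
    hF'.continuousOn
  have key := intervalIntegral.hasDerivAt_integral_of_dominated_loc_of_deriv_le
    (F := fun x θ => h x θ * g θ)
    (F' := fun x θ => deriv (fun t' => h t' θ) x * g θ)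
    (a := (0:ℝ)) (b := 2*π) (x₀ := t) (bound := fun _ => M) (μ := volume)
    (Metric.ball_mem_nhds t one_pos)
    (Eventually.of_forall fun x =>
      (((hcont.comp (Continuous.prodMk_right x)).mul hg)).aestronglyMeasurable)
    (((hcont.comp (Continuous.prodMk_right t)).mul hg).intervalIntegrable _ _)
    ((hF'.comp (Continuous.prodMk_right t)).aestronglyMeasurable)
    ?_ (intervalIntegrable_const) ?_
  · exact key.2
  · refine MeasureTheory.ae_of_all _ fun θ hθ x hx => ?_
    have hθ' : θ ∈ Icc (0:ℝ) (2*π) := by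
      have h2 : (0:ℝ) ≤ 2*π := by positivity
      rw [uIoc_of_le h2] at hθ
      exact Ioc_subset_Icc_self hθ
    have hx' : x ∈ Icc (t - 1) (t + 1) := by
      rw [Metric.mem_ball, Real.dist_eq] at hx
      constructor <;> [linarith [abs_le.mp hx.le]; linarith [abs_le.mp hx.le]]
    exact hM (x, θ) ⟨hx', hθ'⟩
  · refine MeasureTheory.ae_of_all _ fun θ _ x _ => ?_
    exact ((hdiff x θ).hasDerivAt).mul_const (g θ)

end KuramotoAux

open KuramotoAux MeasureTheory

/-- Linearization of the Kuramoto Fokker–Planck equation around the uniform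
density on the circle: in Fourier coordinates the modes decouple, the first
mode grows at rate `(K-2)/4`, every mode `k ≥ 2` decays at rate `k²/2`, and the
uniform density is linearly unstable iff `K > 2`. -/
theorem kuramoto_linearization_fourier_modes
    (K : ℝ) (hK : 0 < K)
    (J : ℝ → ℝ) (hJ : ∀ θ, J θ = -(K / 2) * Real.sin θ)
    (h : ℝ → ℝ → ℝ)
    -- regularity of the perturbation
    (hsmooth : ∀ t, ContDiff ℝ 2 (h t))
    (hcont : Continuous fun p : ℝ × ℝ => h p.1 p.2)
    (hDcont : Continuous fun p : ℝ × ℝ => deriv (fun t => h t p.2) p.1)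
    -- 2π-periodicity and zero mean (mass conservation)
    (hper : ∀ t θ, h t (θ + 2 * π) = h t θ)
    (hmean : ∀ t, (∫ θ in (0 : ℝ)..(2 * π), h t θ) = 0)
    -- the linearized Fokker–Planck equation ∂ₜ h = (1/2) h'' − (1/(2π)) (J ∗ h)'
    (hPDE : ∀ t θ, HasDerivAt (fun t' => h t' θ)
      ((1 / 2) * iteratedDeriv 2 (h t) θ
        - (1 / (2 * π)) * deriv (fun x => ∫ y in (0 : ℝ)..(2 * π), J (x - y) * h t y) θ) t)
    -- Fourier coordinates
    (c s : ℕ → ℝ → ℝ)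
    (hc : ∀ k t, c k t = ∫ θ in (0 : ℝ)..(2 * π), h t θ * Real.cos (k * θ))
    (hs : ∀ k t, s k t = ∫ θ in (0 : ℝ)..(2 * π), h t θ * Real.sin (k * θ)) :
    (∀ t, HasDerivAt (c 1) (((K - 2) / 4) * c 1 t) t
        ∧ HasDerivAt (s 1) (((K - 2) / 4) * s 1 t) t) ∧
    (∀ k : ℕ, 2 ≤ k → ∀ t, HasDerivAt (c k) ((-(k : ℝ) ^ 2 / 2) * c k t) t
        ∧ HasDerivAt (s k) ((-(k : ℝ) ^ 2 / 2) * s k t) t) ∧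
    (0 < (K - 2) / 4 ↔ 2 < K) := by
  have hdiff : ∀ t θ, DifferentiableAt ℝ (fun t' => h t' θ) t :=
    fun t θ => (hPDE t θ).differentiableAt
  -- continuity helpers
  have hth : ∀ t, Continuous (h t) := fun t => hcont.comp (Continuous.prodMk_right t)
  -- the key computation, for every k ≥ 1
  have key : ∀ (k : ℕ), 1 ≤ k → ∀ t,
      HasDerivAt (c k)
        ((-(k:ℝ)^2/2) * c k t + (if k = 1 then (K/4) * c 1 t else 0)) t
      ∧ HasDerivAt (s k)
        ((-(k:ℝ)^2/2) * s k t + (if k = 1 then (K/4) * s 1 t else 0)) t := by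
    intro k hk t
    set C1 := c 1 t with hC1
    set S1 := s 1 t with hS1
    have e1 : C1 = ∫ y in (0:ℝ)..(2*π), h t y * Real.cos y := by
      rw [hC1, hc]; norm_num
    have e2 : S1 = ∫ y in (0:ℝ)..(2*π), h t y * Real.sin y := by
      rw [hS1, hs]; norm_num
    have ihc : IntervalIntegrable (fun y => h t y * Real.cos y) volume 0 (2*π) :=
      ((hth t).mul Real.continuous_cos).intervalIntegrable _ _
    have ihs : IntervalIntegrable (fun y => h t y * Real.sin y) volume 0 (2*π) :=
      ((hth t).mul Real.continuous_sin).intervalIntegrable _ _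
    have hconv : ∀ x, (∫ y in (0:ℝ)..(2*π), J (x - y) * h t y)
        = -(K/2) * (Real.sin x * C1 - Real.cos x * S1) := by
      intro x
      have e : ∀ y, J (x - y) * h t y
          = (-(K/2) * Real.sin x) * (h t y * Real.cos y)
            + ((K/2) * Real.cos x) * (h t y * Real.sin y) := by
        intro y; rw [hJ, Real.sin_sub]; ring
      rw [intervalIntegral.integral_congr (fun y _ => e y),
          intervalIntegral.integral_add (ihc.const_mul _) (ihs.const_mul _),
          intervalIntegral.integral_const_mul, intervalIntegral.integral_const_mul,
          ← e1, ← e2]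
      ring
    have hderivconv : ∀ θ, deriv (fun x => ∫ y in (0:ℝ)..(2*π), J (x - y) * h t y) θ
        = -(K/2) * (Real.cos θ * C1 + Real.sin θ * S1) := by
      intro θ
      have efun : (fun x => ∫ y in (0:ℝ)..(2*π), J (x - y) * h t y)
          = fun x => -(K/2) * (Real.sin x * C1 - Real.cos x * S1) := funext hconv
      rw [efun]
      have hD : HasDerivAt (fun x => -(K/2) * (Real.sin x * C1 - Real.cos x * S1))
          (-(K/2) * (Real.cos θ * C1 + Real.sin θ * S1)) θ := by
        have h1 := (((Real.hasDerivAt_sin θ).mul_const C1).sub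
          ((Real.hasDerivAt_cos θ).mul_const S1)).const_mul (-(K/2))
        refine h1.congr_deriv ?_; ring
      exact hD.deriv
    have hDval : ∀ θ, deriv (fun t' => h t' θ) t
        = (1/2) * iteratedDeriv 2 (h t) θ
          + (K/(4*π)) * (Real.cos θ * C1 + Real.sin θ * S1) := by
      intro θ
      rw [(hPDE t θ).deriv, hderivconv θ]
      have hpi : (π:ℝ) ≠ 0 := Real.pi_ne_zero
      field_simp
      ring
    -- continuity of iteratedDeriv 2 (h t)
    have hc2 : Continuous (iteratedDeriv 2 (h t)) := by
      rw [iteratedDeriv_succ, iteratedDeriv_one]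
      exact (contdiff_deriv (h t) (hsmooth t)).continuous_deriv le_rfl
    have hcc : Continuous fun θ : ℝ => Real.cos ((k:ℝ) * θ) :=
      Real.continuous_cos.comp (continuous_const.mul continuous_id)
    have hsc : Continuous fun θ : ℝ => Real.sin ((k:ℝ) * θ) :=
      Real.continuous_sin.comp (continuous_const.mul continuous_id)
    constructor
    · -- cosine mode
      have hder : HasDerivAt (c k)
          (∫ θ in (0:ℝ)..(2*π), deriv (fun t' => h t' θ) t * Real.cos ((k:ℝ) * θ)) t := by
        have efun : c k = fun t' => ∫ θ in (0:ℝ)..(2*π), h t' θ * Real.cos ((k:ℝ) * θ) :=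
          funext fun t' => hc k t'
        rw [efun]
        exact deriv_under h hcont hDcont hdiff _ hcc t
      have hval : (∫ θ in (0:ℝ)..(2*π), deriv (fun t' => h t' θ) t * Real.cos ((k:ℝ) * θ))
          = (-(k:ℝ)^2/2) * c k t + (if k = 1 then (K/4) * C1 else 0) := by
        have e : ∀ θ, deriv (fun t' => h t' θ) t * Real.cos ((k:ℝ) * θ)
            = (1/2) * (iteratedDeriv 2 (h t) θ * Real.cos ((k:ℝ) * θ))
              + ((K/(4*π)) * C1) * (Real.cos θ * Real.cos ((k:ℝ) * θ))
              + ((K/(4*π)) * S1) * (Real.sin θ * Real.cos ((k:ℝ) * θ)) := by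
          intro θ; rw [hDval θ]; ring
        rw [intervalIntegral.integral_congr (fun θ _ => e θ)]
        have i1 : IntervalIntegrable
            (fun θ => (1/2) * (iteratedDeriv 2 (h t) θ * Real.cos ((k:ℝ) * θ))) volume 0 (2*π) :=
          (continuous_const.mul (hc2.mul hcc)).intervalIntegrable _ _
        have i2 : IntervalIntegrable
            (fun θ => ((K/(4*π)) * C1) * (Real.cos θ * Real.cos ((k:ℝ) * θ))) volume 0 (2*π) :=
          (continuous_const.mul (Real.continuous_cos.mul hcc)).intervalIntegrable _ _
        have i3 : IntervalIntegrable
            (fun θ => ((K/(4*π)) * S1) * (Real.sin θ * Real.cos ((k:ℝ) * θ))) volume 0 (2*π) :=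
          (continuous_const.mul (Real.continuous_sin.mul hcc)).intervalIntegrable _ _
        rw [intervalIntegral.integral_add (i1.add i2) i3,
            intervalIntegral.integral_add i1 i2,
            intervalIntegral.integral_const_mul, intervalIntegral.integral_const_mul,
            intervalIntegral.integral_const_mul,
            parts_cos (h t) (hsmooth t) (hper t) k, orth_cc k hk, orth_sc k hk,
            hc k t]
        rcases eq_or_ne k 1 with hk1 | hk1
        · subst hk1
          rw [if_pos rfl, if_pos rfl]
          have hpi : (π:ℝ) ≠ 0 := Real.pi_ne_zero
          rw [← hc 1 t]
          field_simp
          ring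
        · rw [if_neg hk1, if_neg hk1, ← hc k t]
          ring
      rw [hval] at hder
      exact hder
    · -- sine mode
      have hder : HasDerivAt (s k)
          (∫ θ in (0:ℝ)..(2*π), deriv (fun t' => h t' θ) t * Real.sin ((k:ℝ) * θ)) t := by
        have efun : s k = fun t' => ∫ θ in (0:ℝ)..(2*π), h t' θ * Real.sin ((k:ℝ) * θ) :=
          funext fun t' => hs k t'
        rw [efun]
        exact deriv_under h hcont hDcont hdiff _ hsc t
      have hval : (∫ θ in (0:ℝ)..(2*π), deriv (fun t' => h t' θ) t * Real.sin ((k:ℝ) * θ))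
          = (-(k:ℝ)^2/2) * s k t + (if k = 1 then (K/4) * S1 else 0) := by
        have e : ∀ θ, deriv (fun t' => h t' θ) t * Real.sin ((k:ℝ) * θ)
            = (1/2) * (iteratedDeriv 2 (h t) θ * Real.sin ((k:ℝ) * θ))
              + ((K/(4*π)) * C1) * (Real.cos θ * Real.sin ((k:ℝ) * θ))
              + ((K/(4*π)) * S1) * (Real.sin θ * Real.sin ((k:ℝ) * θ)) := by
          intro θ; rw [hDval θ]; ring
        rw [intervalIntegral.integral_congr (fun θ _ => e θ)]
        have i1 : IntervalIntegrable
            (fun θ => (1/2) * (iteratedDeriv 2 (h t) θ * Real.sin ((k:ℝ) * θ))) volume 0 (2*π) :=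
          (continuous_const.mul (hc2.mul hsc)).intervalIntegrable _ _
        have i2 : IntervalIntegrable
            (fun θ => ((K/(4*π)) * C1) * (Real.cos θ * Real.sin ((k:ℝ) * θ))) volume 0 (2*π) :=
          (continuous_const.mul (Real.continuous_cos.mul hsc)).intervalIntegrable _ _
        have i3 : IntervalIntegrable
            (fun θ => ((K/(4*π)) * S1) * (Real.sin θ * Real.sin ((k:ℝ) * θ))) volume 0 (2*π) :=
          (continuous_const.mul (Real.continuous_sin.mul hsc)).intervalIntegrable _ _
        rw [intervalIntegral.integral_add (i1.add i2) i3,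
            intervalIntegral.integral_add i1 i2,
            intervalIntegral.integral_const_mul, intervalIntegral.integral_const_mul,
            intervalIntegral.integral_const_mul,
            parts_sin (h t) (hsmooth t) (hper t) k, orth_cs k hk, orth_ss k hk,
            hs k t]
        rcases eq_or_ne k 1 with hk1 | hk1
        · subst hk1
          rw [if_pos rfl, if_pos rfl]
          have hpi : (π:ℝ) ≠ 0 := Real.pi_ne_zero
          rw [← hs 1 t]
          field_simp
          ring
        · rw [if_neg hk1, if_neg hk1, ← hs k t]
          ring
      rw [hval] at hder
      exact hder
  refine ⟨fun t => ?_, fun k hk t => ?_, by constructor <;> intro h' <;> linarith⟩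
  · obtain ⟨h1, h2⟩ := key 1 le_rfl t
    constructor
    · convert h1 using 1; norm_num; ring
    · convert h2 using 1; norm_num; ring
  · obtain ⟨h1, h2⟩ := key k (by omega) t
    have hk1 : k ≠ 1 := by omega
    constructor
    · convert h1 using 1; rw [if_neg hk1]; ring
    · convert h2 using 1; rw [if_neg hk1]; ring
end
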